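/- The Second Lower Bound and its real-line form: for measure networks X, Y and p ∈ [1,∞], 2 d_{N,p}(X,Y) ≥ inf over couplings μ ∈ C(μ_X⊗μ_X, μ_Y⊗μ_Y) of ‖ω_X − ω_Y‖_{L^p(μ)}, and this infimum equals W_p((ω_X)_*(μ_X⊗μ_X), (ω_Y)_*(μ_Y⊗μ_Y)), the p-Wasserstein distance between the distributions of edge weights. -/

import Mathlib

open MeasureTheory ENNReal

open ProbabilityTheory Set

/-- The set of couplings between two measures: probability-type measures on the product
with the prescribed marginals. -/
def Coupling {X Y : Type*} [MeasurableSpace X] [MeasurableSpace Y]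
    (μX : Measure X) (μY : Measure Y) : Set (Measure (X × Y)) :=
  {μ | μ.fst = μX ∧ μ.snd = μY}

/-- The `p`-distortion of a coupling `μ` between two measure networks, namely
`‖ω_X - ω_Y‖_{L^p(μ ⊗ μ)}` (for `p = ∞` this is the essential supremum). -/
noncomputable def dis {X Y : Type*} [MeasurableSpace X] [MeasurableSpace Y]
    (ωX : X × X → ℝ) (ωY : Y × Y → ℝ) (p : ℝ≥0∞) (μ : Measure (X × Y)) : ℝ≥0∞ :=
  eLpNorm (fun q : (X × Y) × (X × Y) => ωX (q.1.1, q.2.1) - ωY (q.1.2, q.2.2)) p (μ.prod μ)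

/-- The network Gromov–Wasserstein distance: half the infimal `p`-distortion over couplings. -/
noncomputable def dN {X Y : Type*} [MeasurableSpace X] [MeasurableSpace Y]
    (ωX : X × X → ℝ) (ωY : Y × Y → ℝ) (p : ℝ≥0∞) (μX : Measure X) (μY : Measure Y) : ℝ≥0∞ :=
  (1 / 2) * ⨅ μ ∈ Coupling μX μY, dis ωX ωY p μ

/-- The `p`-th Wasserstein distance between two Borel measures on `ℝ`, as an infimum of
`L^p` transport costs over couplings. -/
noncomputable def Wp (p : ℝ≥0∞) (α β : Measure ℝ) : ℝ≥0∞ :=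
  ⨅ θ ∈ Coupling α β, eLpNorm (fun q : ℝ × ℝ => q.1 - q.2) p θ

lemma coupling_isProb {X Y : Type*} [MeasurableSpace X] [MeasurableSpace Y]
    {μX : Measure X} [IsProbabilityMeasure μX] {μ : Measure (X × Y)}
    (h : μ.fst = μX) : IsProbabilityMeasure μ := by
  constructor
  rw [← Set.preimage_univ (f := Prod.fst), ← Measure.fst_apply MeasurableSet.univ, h]
  exact measure_univ

/-- Lifting a coupling of pushforwards to a coupling of the original measures,
preserving the transport cost. -/
lemma lift_coupling {A B : Type*} [MeasurableSpace A] [StandardBorelSpace A]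
    [MeasurableSpace B] [StandardBorelSpace B] [Nonempty A] [Nonempty B]
    (ν : Measure A) (ρ : Measure B) [IsProbabilityMeasure ν] [IsProbabilityMeasure ρ]
    (f : A → ℝ) (g : B → ℝ) (hf : Measurable f) (hg : Measurable g)
    (θ : Measure (ℝ × ℝ)) (hθ : θ ∈ Coupling (ν.map f) (ρ.map g)) (p : ℝ≥0∞) :
    ∃ μ ∈ Coupling ν ρ,
      eLpNorm (fun q : A × B => f q.1 - g q.2) p μ
        = eLpNorm (fun q : ℝ × ℝ => q.1 - q.2) p θ := by
  obtain ⟨hθ1, hθ2⟩ := hθ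
  have hνf : IsProbabilityMeasure (ν.map f) := Measure.isProbabilityMeasure_map hf.aemeasurable
  have hρg : IsProbabilityMeasure (ρ.map g) := Measure.isProbabilityMeasure_map hg.aemeasurable
  have hθP : IsProbabilityMeasure θ := coupling_isProb hθ1
  set ρA : Measure (ℝ × A) := ν.map (fun a => (f a, a)) with hρA
  set ρB : Measure (ℝ × B) := ρ.map (fun b => (g b, b)) with hρB
  have hmA : Measurable (fun a : A => (f a, a)) := hf.prodMk measurable_id
  have hmB : Measurable (fun b : B => (g b, b)) := hg.prodMk measurable_id
  have hρAP : IsProbabilityMeasure ρA := Measure.isProbabilityMeasure_map hmA.aemeasurable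
  have hρBP : IsProbabilityMeasure ρB := Measure.isProbabilityMeasure_map hmB.aemeasurable
  have hρAfst : ρA.fst = ν.map f := by
    rw [hρA, Measure.fst, Measure.map_map measurable_fst hmA]; rfl
  have hρBfst : ρB.fst = ρ.map g := by
    rw [hρB, Measure.fst, Measure.map_map measurable_fst hmB]; rfl
  set κ := ρA.condKernel with hκ
  set η := ρB.condKernel with hη
  set K : ProbabilityTheory.Kernel (ℝ × ℝ) (A × B) :=
    (κ.comap Prod.fst measurable_fst).prod (η.comap Prod.snd measurable_snd) with hK
  have hKapp : ∀ st : ℝ × ℝ, K st = (κ st.1).prod (η st.2) := by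
    intro st
    rw [hK, Kernel.prod_apply, Kernel.comap_apply, Kernel.comap_apply]
  set μ : Measure (A × B) := (θ ⊗ₘ K).map Prod.snd with hμ
  -- first marginal
  have hfst : μ.fst = ν := by
    ext s hs
    rw [Measure.fst_apply hs, hμ,
      Measure.map_apply measurable_snd (measurable_fst hs),
      Measure.compProd_apply ((measurable_fst hs).preimage measurable_snd)]
    have : ∀ st : ℝ × ℝ, K st (Prod.mk st ⁻¹' (Prod.snd ⁻¹' (Prod.fst ⁻¹' s)))
        = κ st.1 s := by
      intro st
      have hpre : (Prod.mk st ⁻¹' (Prod.snd ⁻¹' (Prod.fst ⁻¹' s))) = s ×ˢ (univ : Set B) := by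
        ext ab; simp
      rw [hpre, hKapp, Measure.prod_prod, measure_univ, mul_one]
    simp_rw [this]
    have hmeas : Measurable fun r : ℝ => κ r s := Kernel.measurable_coe κ hs
    rw [← lintegral_map hmeas measurable_fst,
      show θ.map Prod.fst = θ.fst from rfl, hθ1, ← hρAfst]
    have := Measure.disintegrate ρA ρA.condKernel
    calc ∫⁻ r, κ r s ∂ρA.fst
        = (ρA.fst ⊗ₘ κ) (Prod.snd ⁻¹' s) := by
          rw [Measure.compProd_apply (hs.preimage measurable_snd)]; rfl
      _ = ν s := by
          rw [this, hρA, Measure.map_apply hmA (hs.preimage measurable_snd)]; rfl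
  -- second marginal
  have hsnd : μ.snd = ρ := by
    ext s hs
    rw [Measure.snd_apply hs, hμ,
      Measure.map_apply measurable_snd (measurable_snd hs),
      Measure.compProd_apply ((measurable_snd hs).preimage measurable_snd)]
    have : ∀ st : ℝ × ℝ, K st (Prod.mk st ⁻¹' (Prod.snd ⁻¹' (Prod.snd ⁻¹' s)))
        = η st.2 s := by
      intro st
      have hpre : (Prod.mk st ⁻¹' (Prod.snd ⁻¹' (Prod.snd ⁻¹' s))) = (univ : Set A) ×ˢ s := by
        ext ab; simp
      rw [hpre, hKapp, Measure.prod_prod, measure_univ, one_mul]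
    simp_rw [this]
    have hmeas : Measurable fun r : ℝ => η r s := Kernel.measurable_coe η hs
    rw [← lintegral_map hmeas measurable_snd,
      show θ.map Prod.snd = θ.snd from rfl, hθ2, ← hρBfst]
    have := Measure.disintegrate ρB ρB.condKernel
    calc ∫⁻ r, η r s ∂ρB.fst
        = (ρB.fst ⊗ₘ η) (Prod.snd ⁻¹' s) := by
          rw [Measure.compProd_apply (hs.preimage measurable_snd)]; rfl
      _ = ρ s := by
          rw [this, hρB, Measure.map_apply hmB (hs.preimage measurable_snd)]; rfl
  refine ⟨μ, ⟨hfst, hsnd⟩, ?_⟩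
  -- a.e. identification
  have haeA : ∀ᵐ ra : ℝ × A ∂ρA, f ra.2 = ra.1 := by
    rw [hρA]
    rw [ae_map_iff hmA.aemeasurable]
    · simp
    · exact measurableSet_eq_fun (hf.comp measurable_snd) measurable_fst
  have haeB : ∀ᵐ rb : ℝ × B ∂ρB, g rb.2 = rb.1 := by
    rw [hρB]
    rw [ae_map_iff hmB.aemeasurable]
    · simp
    · exact measurableSet_eq_fun (hg.comp measurable_snd) measurable_fst
  have haeA' : ∀ᵐ r ∂(ν.map f), ∀ᵐ a ∂κ r, f a = r := by
    have := Measure.ae_ae_of_ae_compProd (κ := κ) (p := fun ra : ℝ × A => f ra.2 = ra.1)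
      (by rw [Measure.disintegrate ρA ρA.condKernel]; exact haeA)
    rwa [hρAfst] at this
  have haeB' : ∀ᵐ r ∂(ρ.map g), ∀ᵐ b ∂η r, g b = r := by
    have := Measure.ae_ae_of_ae_compProd (κ := η) (p := fun rb : ℝ × B => g rb.2 = rb.1)
      (by rw [Measure.disintegrate ρB ρB.condKernel]; exact haeB)
    rwa [hρBfst] at this
  have haeθ : ∀ᵐ q : (ℝ × ℝ) × (A × B) ∂(θ ⊗ₘ K), f q.2.1 = q.1.1 ∧ g q.2.2 = q.1.2 := by
    apply Measure.ae_compProd_of_ae_ae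
    · refine MeasurableSet.inter ?_ ?_
      · exact measurableSet_eq_fun (hf.comp (measurable_fst.comp measurable_snd))
          (measurable_fst.comp measurable_fst)
      · exact measurableSet_eq_fun (hg.comp (measurable_snd.comp measurable_snd))
          (measurable_snd.comp measurable_fst)
    · have h1 : ∀ᵐ st : ℝ × ℝ ∂θ, ∀ᵐ a ∂κ st.1, f a = st.1 := by
        apply ae_of_ae_map (f := Prod.fst) (p := fun r => ∀ᵐ a ∂κ r, f a = r)
          measurable_fst.aemeasurable
        rw [show θ.map Prod.fst = θ.fst from rfl, hθ1]; exact haeA'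
      have h2 : ∀ᵐ st : ℝ × ℝ ∂θ, ∀ᵐ b ∂η st.2, g b = st.2 := by
        apply ae_of_ae_map (f := Prod.snd) (p := fun r => ∀ᵐ b ∂η r, g b = r)
          measurable_snd.aemeasurable
        rw [show θ.map Prod.snd = θ.snd from rfl, hθ2]; exact haeB'
      filter_upwards [h1, h2] with st h1 h2
      rw [hKapp]
      have hA : ∀ᵐ ab : A × B ∂(κ st.1).prod (η st.2), f ab.1 = st.1 := by
        apply ae_of_ae_map (f := Prod.fst) (p := fun a => f a = st.1)
          measurable_fst.aemeasurable
        rwa [show ((κ st.1).prod (η st.2)).map Prod.fst = ((κ st.1).prod (η st.2)).fst from rfl,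
          Measure.fst_prod]
      have hB : ∀ᵐ ab : A × B ∂(κ st.1).prod (η st.2), g ab.2 = st.2 := by
        apply ae_of_ae_map (f := Prod.snd) (p := fun b => g b = st.2)
          measurable_snd.aemeasurable
        rwa [show ((κ st.1).prod (η st.2)).map Prod.snd = ((κ st.1).prod (η st.2)).snd from rfl,
          Measure.snd_prod]
      filter_upwards [hA, hB] with ab hA hB using ⟨hA, hB⟩
  -- cost computation
  have hcost1 : eLpNorm (fun q : A × B => f q.1 - g q.2) p μ
      = eLpNorm ((fun q : A × B => f q.1 - g q.2) ∘ Prod.snd) p (θ ⊗ₘ K) := by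
    rw [hμ]
    exact eLpNorm_map_measure
      (((hf.comp measurable_fst).sub (hg.comp measurable_snd)).aestronglyMeasurable)
      measurable_snd.aemeasurable
  have hcost2 : eLpNorm ((fun q : A × B => f q.1 - g q.2) ∘ Prod.snd) p (θ ⊗ₘ K)
      = eLpNorm ((fun r : ℝ × ℝ => r.1 - r.2) ∘ Prod.fst) p (θ ⊗ₘ K) := by
    apply eLpNorm_congr_ae
    filter_upwards [haeθ] with q hq
    simp only [Function.comp_apply, hq.1, hq.2]
  have hcost3 : eLpNorm ((fun r : ℝ × ℝ => r.1 - r.2) ∘ Prod.fst) p (θ ⊗ₘ K)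
      = eLpNorm (fun r : ℝ × ℝ => r.1 - r.2) p θ := by
    rw [← eLpNorm_map_measure (g := fun r : ℝ × ℝ => r.1 - r.2)
      ((measurable_fst.sub measurable_snd).aestronglyMeasurable)
      measurable_fst.aemeasurable,
      show (θ ⊗ₘ K).map Prod.fst = (θ ⊗ₘ K).fst from rfl, Measure.fst_compProd]
  rw [hcost1, hcost2, hcost3]

/-- **The Second Lower Bound and its real-line form**: for measure networks `X`, `Y`,
`2 d_{N,p}(X,Y) ≥ inf over couplings μ of μ_X ⊗ μ_X and μ_Y ⊗ μ_Y of ‖ω_X − ω_Y‖_{L^p(μ)}`,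
and this infimum equals the `p`-Wasserstein distance between the edge-weight distributions
`(ω_X)_*(μ_X ⊗ μ_X)` and `(ω_Y)_*(μ_Y ⊗ μ_Y)`. -/
theorem second_lower_bound
    {X Y : Type*} [TopologicalSpace X] [PolishSpace X] [MeasurableSpace X] [BorelSpace X]
    [TopologicalSpace Y] [PolishSpace Y] [MeasurableSpace Y] [BorelSpace Y]
    (μX : Measure X) (μY : Measure Y) [IsProbabilityMeasure μX] [IsProbabilityMeasure μY]
    (ωX : X × X → ℝ) (ωY : Y × Y → ℝ)
    (hωX : Measurable ωX) (hωY : Measurable ωY)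
    (hbX : ∃ M, ∀ q, |ωX q| ≤ M) (hbY : ∃ M, ∀ q, |ωY q| ≤ M)
    (p : ℝ≥0∞) (hp : 1 ≤ p) :
    (⨅ μ ∈ Coupling (μX.prod μX) (μY.prod μY),
        eLpNorm (fun q : (X × X) × (Y × Y) => ωX q.1 - ωY q.2) p μ)
      ≤ 2 * dN ωX ωY p μX μY ∧
    (⨅ μ ∈ Coupling (μX.prod μX) (μY.prod μY),
        eLpNorm (fun q : (X × X) × (Y × Y) => ωX q.1 - ωY q.2) p μ)
      = Wp p ((μX.prod μX).map ωX) ((μY.prod μY).map ωY) := by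
  constructor
  · -- Second lower bound
    rw [dN, ← mul_assoc, show (2 : ℝ≥0∞) * (1 / 2) = 1 by
      rw [one_div]; exact ENNReal.mul_inv_cancel two_ne_zero (by simp), one_mul]
    refine le_iInf₂ fun μ hμ => ?_
    haveI : IsProbabilityMeasure μ := coupling_isProb hμ.1
    set T : (X × Y) × (X × Y) → (X × X) × (Y × Y) :=
      fun q => ((q.1.1, q.2.1), (q.1.2, q.2.2)) with hT
    have hTm : Measurable T :=
      ((measurable_fst.comp measurable_fst).prodMk
        (measurable_fst.comp measurable_snd)).prodMk
      ((measurable_snd.comp measurable_fst).prodMk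
        (measurable_snd.comp measurable_snd))
    set ν : Measure ((X × X) × (Y × Y)) := (μ.prod μ).map T with hν
    have hνC : ν ∈ Coupling (μX.prod μX) (μY.prod μY) := by
      constructor
      · rw [hν, Measure.fst, Measure.map_map measurable_fst hTm,
          show (Prod.fst ∘ T) = Prod.map (Prod.fst : X × Y → X) Prod.fst from rfl,
          ← Measure.map_prod_map _ _ measurable_fst measurable_fst,
          show μ.map Prod.fst = μ.fst from rfl, hμ.1]
      · rw [hν, Measure.snd, Measure.map_map measurable_snd hTm,
          show (Prod.snd ∘ T) = Prod.map (Prod.snd : X × Y → Y) Prod.snd from rfl,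
          ← Measure.map_prod_map _ _ measurable_snd measurable_snd,
          show μ.map Prod.snd = μ.snd from rfl, hμ.2]
    refine (iInf₂_le ν hνC).trans_eq ?_
    rw [hν, dis]
    exact eLpNorm_map_measure
      (((hωX.comp measurable_fst).sub (hωY.comp measurable_snd)).aestronglyMeasurable)
      hTm.aemeasurable
  · -- Equality with the Wasserstein distance
    haveI : Nonempty (X × X) := Measure.nonempty_of_neZero (μX.prod μX)
    haveI : Nonempty (Y × Y) := Measure.nonempty_of_neZero (μY.prod μY)
    refine le_antisymm ?_ ?_
    · refine le_iInf₂ fun θ hθ => ?_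
      obtain ⟨μ, hμ, hcost⟩ :=
        lift_coupling (μX.prod μX) (μY.prod μY) ωX ωY hωX hωY θ hθ p
      exact (iInf₂_le μ hμ).trans_eq hcost
    · refine le_iInf₂ fun μ hμ => ?_
      haveI : IsProbabilityMeasure μ := coupling_isProb hμ.1
      set h : (X × X) × (Y × Y) → ℝ × ℝ := fun q => (ωX q.1, ωY q.2) with hh
      have hhm : Measurable h := (hωX.comp measurable_fst).prodMk (hωY.comp measurable_snd)
      set θ : Measure (ℝ × ℝ) := μ.map h with hθ
      have hθC : θ ∈ Coupling ((μX.prod μX).map ωX) ((μY.prod μY).map ωY) := by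
        constructor
        · rw [hθ, Measure.fst, Measure.map_map measurable_fst hhm,
            show (Prod.fst ∘ h) = ωX ∘ Prod.fst from rfl,
            ← Measure.map_map hωX measurable_fst,
            show μ.map Prod.fst = μ.fst from rfl, hμ.1]
        · rw [hθ, Measure.snd, Measure.map_map measurable_snd hhm,
            show (Prod.snd ∘ h) = ωY ∘ Prod.snd from rfl,
            ← Measure.map_map hωY measurable_snd,
            show μ.map Prod.snd = μ.snd from rfl, hμ.2]
      refine (iInf₂_le θ hθC).trans_eq ?_
      rw [hθ]
      exact eLpNorm_map_measure
        ((measurable_fst.sub measurable_snd).aestronglyMeasurable)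
        hhm.aemeasurable
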